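/- arXiv:2411.03366 — 2 statements merged into one kernel-verified Lean document; each statement's English description precedes it below -/
import Mathlib

section
/- Let V be a finite-dimensional real vector space, γ₁,…,γ_m ∈ V*, and x = (x₁,…,x_m) ∈ ℝ^m such that the set {γ_i : x_i ≠ 0} spans V*. Define L : V → V* by L(v) = Σ_{i=1}^m e^{2γ_i(v)} x_i² γ_i. Then L is injective and its range equals relint(cone{γ_i : x_i ≠ 0}). -/
open Filter Set

/-- The cone generated by the vectors `v i` for `i ∈ I`: all nonnegative linear
combinations of the `v i`, `i ∈ I`. -/
def coneOf {E : Type*} [AddCommGroup E] [Module ℝ E] {m : ℕ}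
    (v : Fin m → E) (I : Set (Fin m)) : Set E :=
  {x | ∃ c : Fin m → ℝ, (∀ i, 0 ≤ c i) ∧ (∀ i ∉ I, c i = 0) ∧ x = ∑ i, c i • v i}


lemma sep_aux {V : Type*} [NormedAddCommGroup V] [NormedSpace ℝ V]
    [FiniteDimensional ℝ V] {m : ℕ} (γ : Fin m → (V →L[ℝ] ℝ)) (x : Fin m → ℝ)
    (hspan : Submodule.span ℝ (γ '' {i | x i ≠ 0}) = ⊤) (v : V)
    (h : ∀ i, x i ≠ 0 → γ i v = 0) : v = 0 := by
  have key : ∀ f : V →L[ℝ] ℝ, f ∈ Submodule.span ℝ (γ '' {i | x i ≠ 0}) → f v = 0 := by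
    intro f hmem
    induction hmem using Submodule.span_induction with
    | mem g hg => obtain ⟨i, hi, rfl⟩ := hg; exact h i hi
    | zero => rfl
    | add g₁ g₂ _ _ h1 h2 => simp [h1, h2]
    | smul a g _ hg => simp [hg]
  by_contra hv
  obtain ⟨f, hf⟩ := SeparatingDual.exists_ne_zero (R := ℝ) hv
  exact hf (key f (hspan ▸ Submodule.mem_top))

lemma intrinsic_eq_interior {W : Type*} [NormedAddCommGroup W] [NormedSpace ℝ W]
    {s : Set W} (h : affineSpan ℝ s = ⊤) : intrinsicInterior ℝ s = interior s := by
  apply Set.Subset.antisymm _ interior_subset_intrinsicInterior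
  rintro x ⟨y, hy, rfl⟩
  have hopen : IsOpen ((affineSpan ℝ s : Set W)) := by
    rw [h]; exact isOpen_univ
  have hmap := hopen.isOpenMap_subtype_val
  refine interior_maximal ?_ (hmap _ isOpen_interior) ⟨y, hy, rfl⟩
  rintro _ ⟨z, hz, rfl⟩
  exact Set.mem_preimage.mp (interior_subset hz)

lemma mem_interior_cone {V : Type*} [NormedAddCommGroup V] [NormedSpace ℝ V]
    [FiniteDimensional ℝ V] {m : ℕ} (γ : Fin m → (V →L[ℝ] ℝ)) (x : Fin m → ℝ)
    (hspan : Submodule.span ℝ (γ '' {i | x i ≠ 0}) = ⊤) (c : Fin m → ℝ)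
    (hcpos : ∀ i, x i ≠ 0 → 0 < c i) (hc0 : ∀ i, x i = 0 → c i = 0) :
    (∑ i, c i • γ i) ∈ interior (coneOf γ {i | x i ≠ 0}) := by
  classical
  set v : Fin m → (V →L[ℝ] ℝ) := fun i => if x i ≠ 0 then γ i else 0 with hv
  set T : (Fin m → ℝ) →L[ℝ] (V →L[ℝ] ℝ) :=
    LinearMap.toContinuousLinearMap (Fintype.linearCombination ℝ v) with hT
  have hTapp : ∀ d : Fin m → ℝ, T d = ∑ i, d i • v i := fun d => by
    simp [hT, Fintype.linearCombination_apply]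
  have hrange : LinearMap.range (Fintype.linearCombination ℝ v) = ⊤ := by
    rw [eq_top_iff, ← hspan]
    refine Submodule.span_le.2 ?_
    rintro _ ⟨i, hi, rfl⟩
    have hi' : x i ≠ 0 := hi
    exact ⟨Pi.single i 1, by
      simp only [Fintype.linearCombination_apply_single, one_smul, hv]
      rw [if_pos hi']⟩
  have hTsurj : Function.Surjective T := by
    intro w
    obtain ⟨d, hd⟩ := (LinearMap.range_eq_top.1 hrange) w
    exact ⟨d, hd⟩
  have hopenmap : IsOpenMap T := T.isOpenMap hTsurj
  set U : Set (Fin m → ℝ) := {d | ∀ i, 0 < d i} with hU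
  have hUopen : IsOpen U := by
    have : U = ⋂ i, {d : Fin m → ℝ | 0 < d i} := by ext d; simp [hU, Set.mem_iInter]
    rw [this]
    exact isOpen_iInter_of_finite fun i => isOpen_lt continuous_const (continuous_apply i)
  have hmem : (∑ i, c i • γ i) ∈ T '' U := by
    refine ⟨fun i => if x i ≠ 0 then c i else 1, fun i => ?_, ?_⟩
    · by_cases hxi : x i ≠ 0
      · simpa [hxi] using hcpos i hxi
      · simp [hxi]
    · rw [hTapp]
      refine Finset.sum_congr rfl fun i _ => ?_
      by_cases hxi : x i ≠ 0
      · simp [hv, hxi]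
      · push_neg at hxi
        simp [hv, hxi, hc0 i hxi]
  have hsub : T '' U ⊆ coneOf γ {i | x i ≠ 0} := by
    rintro _ ⟨d, hd, rfl⟩
    refine ⟨fun i => if x i ≠ 0 then d i else 0, fun i => ?_, fun i hi => ?_, ?_⟩
    · by_cases hxi : x i ≠ 0 <;> simp [hxi, (hd i).le]
    · simp only [Set.mem_setOf_eq] at hi; simp [hi]
    · rw [hTapp]
      refine Finset.sum_congr rfl fun i _ => ?_
      by_cases hxi : x i ≠ 0 <;> simp [hv, hxi]
  exact interior_maximal hsub (hopenmap U hUopen) hmem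

lemma term_bound (a c d : ℝ) (ha : 0 ≤ a) (hd : 0 ≤ d) (hdc : d ≤ c) (hac : a = 0 → c = 0) :
    ∃ β, 0 ≤ β ∧ ∀ t : ℝ, d * |t| - β ≤ a * Real.exp (2 * t) - c * t := by
  rcases ha.lt_or_eq with hapos | hzero
  · refine ⟨(c + d)^2 / (4 * a), by positivity, fun t => ?_⟩
    have hβ : 4 * a * ((c + d)^2 / (4 * a)) = (c + d)^2 := by field_simp
    have hQ : 0 ≤ (c + d)^2 / (4 * a) := by positivity
    rcases le_or_gt t 0 with ht | ht
    · rw [abs_of_nonpos ht]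
      have hexp : 0 < Real.exp (2 * t) := Real.exp_pos _
      have hct : (c - d) * t ≤ 0 := mul_nonpos_of_nonneg_of_nonpos (by linarith) ht
      nlinarith [mul_pos hapos hexp]
    · rw [abs_of_pos ht]
      have h1 : (1 + t)^2 ≤ Real.exp (2 * t) := by
        have h2 : 1 + t ≤ Real.exp t := by linarith [Real.add_one_le_exp t]
        have h3 : 0 ≤ 1 + t := by linarith
        calc (1 + t)^2 ≤ Real.exp t ^ 2 := by nlinarith [Real.exp_pos t]
          _ = Real.exp (2 * t) := by
            rw [sq, ← Real.exp_add]; ring_nf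
      have key : 0 ≤ a * t^2 - (c + d) * t + (c + d)^2 / (4 * a) := by
        nlinarith [sq_nonneg (2 * a * t - (c + d)), hβ, hapos]
      have h4 := mul_le_mul_of_nonneg_left h1 ha
      nlinarith [key, h4, hapos, ht]
  · have hc : c = 0 := hac hzero.symm
    have hd0 : d = 0 := le_antisymm (hdc.trans hc.le) hd
    exact ⟨0, le_refl 0, fun t => by
      rw [← hzero, hc, hd0]; simp [(Real.exp_pos (2*t)).le]⟩

lemma norm_bound {V : Type*} [NormedAddCommGroup V] [NormedSpace ℝ V]
    [FiniteDimensional ℝ V] {m : ℕ} (γ : Fin m → (V →L[ℝ] ℝ)) (x : Fin m → ℝ)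
    (hspan : Submodule.span ℝ (γ '' {i | x i ≠ 0}) = ⊤) :
    ∃ ε > 0, ∀ v : V, ε * ‖v‖ ≤ ∑ i, |x i| * |γ i v| := by
  set g : V → ℝ := fun v => ∑ i, |x i| * |γ i v| with hg
  have hgcont : Continuous g := by
    apply continuous_finset_sum
    intro i _
    exact (continuous_const.mul ((γ i).continuous.abs))
  have hgnonneg : ∀ v, 0 ≤ g v := fun v =>
    Finset.sum_nonneg fun i _ => mul_nonneg (abs_nonneg _) (abs_nonneg _)
  have hgpos : ∀ v : V, v ≠ 0 → 0 < g v := by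
    intro v hv
    rcases (hgnonneg v).lt_or_eq with h | h
    · exact h
    · exfalso
      apply hv
      apply sep_aux γ x hspan
      intro i hxi
      have := (Finset.sum_eq_zero_iff_of_nonneg
        (fun i _ => mul_nonneg (abs_nonneg (x i)) (abs_nonneg (γ i v)))).1 h.symm i (Finset.mem_univ i)
      rcases mul_eq_zero.1 this with h1 | h1
      · exact absurd (abs_eq_zero.1 h1) hxi
      · exact abs_eq_zero.1 h1
  have hghom : ∀ (a : ℝ) (v : V), 0 ≤ a → g (a • v) = a * g v := by
    intro a v ha
    simp only [hg, map_smul, smul_eq_mul, abs_mul, abs_of_nonneg ha, Finset.mul_sum]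
    exact Finset.sum_congr rfl fun i _ => by ring
  rcases subsingleton_or_nontrivial V with hV | hV
  · exact ⟨1, one_pos, fun v => by
      rw [Subsingleton.elim v 0]
      simp [hgnonneg 0, hg]⟩
  · obtain ⟨v₀, hv₀s, hv₀min⟩ :=
      (isCompact_sphere (0 : V) 1).exists_isMinOn
        (NormedSpace.sphere_nonempty.2 zero_le_one) hgcont.continuousOn
    have hv₀norm : ‖v₀‖ = 1 := by simpa using hv₀s
    have hv₀ne : v₀ ≠ 0 := by
      intro h; rw [h] at hv₀norm; simp at hv₀norm
    refine ⟨g v₀, hgpos v₀ hv₀ne, fun v => ?_⟩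
    rcases eq_or_ne v 0 with rfl | hv
    · simp [hgnonneg 0, hg]
    · have hnv : 0 < ‖v‖ := norm_pos_iff.2 hv
      have hu : (‖v‖⁻¹ • v) ∈ Metric.sphere (0 : V) 1 := by
        simp [norm_smul, abs_of_nonneg (inv_nonneg.2 hnv.le), inv_mul_cancel₀ hnv.ne']
      have hle : g v₀ ≤ g (‖v‖⁻¹ • v) := hv₀min hu
      have h2 : g (‖v‖⁻¹ • v) = ‖v‖⁻¹ * g v := hghom _ _ (inv_nonneg.2 hnv.le)
      rw [h2] at hle
      show g v₀ * ‖v‖ ≤ g v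
      calc g v₀ * ‖v‖ ≤ (‖v‖⁻¹ * g v) * ‖v‖ := by nlinarith
        _ = g v := by field_simp

lemma surj_aux {V : Type*} [NormedAddCommGroup V] [NormedSpace ℝ V]
    [FiniteDimensional ℝ V] {m : ℕ} (γ : Fin m → (V →L[ℝ] ℝ)) (x : Fin m → ℝ)
    (hspan : Submodule.span ℝ (γ '' {i | x i ≠ 0}) = ⊤) (c : Fin m → ℝ)
    (hcpos : ∀ i, x i ≠ 0 → 0 < c i) (hc0 : ∀ i, x i = 0 → c i = 0) :
    ∃ v : V, ∑ i, (Real.exp (2 * γ i v) * x i ^ 2) • γ i = ∑ i, c i • γ i := by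
  classical
  set F : V → ℝ :=
    fun v => (∑ i, x i ^ 2 / 2 * Real.exp (2 * γ i v)) - ∑ i, c i * γ i v with hF
  have hF' : ∀ v : V, HasFDerivAt F
      ((∑ i, (Real.exp (2 * γ i v) * x i ^ 2) • γ i) - ∑ i, c i • γ i) v := by
    intro v
    have h1 : ∀ i : Fin m, HasFDerivAt (fun w => x i ^ 2 / 2 * Real.exp (2 * γ i w))
        ((Real.exp (2 * γ i v) * x i ^ 2) • γ i) v := by
      intro i
      have ha : HasFDerivAt (fun w => 2 * γ i w) ((2 : ℝ) • γ i) v :=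
        ((γ i).hasFDerivAt).const_mul 2
      have hb := ha.exp
      have hcm := hb.const_mul (x i ^ 2 / 2)
      have heq : (Real.exp (2 * γ i v) * x i ^ 2) • γ i
          = (x i ^ 2 / 2) • (Real.exp (2 * γ i v) • ((2 : ℝ) • γ i)) := by
        rw [smul_smul, smul_smul]; congr 1; ring
      rw [heq]; exact hcm
    have h2 : ∀ i : Fin m, HasFDerivAt (fun w => c i * γ i w) (c i • γ i) v :=
      fun i => ((γ i).hasFDerivAt).const_mul (c i)
    exact (HasFDerivAt.fun_sum fun i _ => h1 i).sub (HasFDerivAt.fun_sum fun i _ => h2 i)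
  have hFdiff : Differentiable ℝ F := fun v => (hF' v).differentiableAt
  have hFcont : Continuous F := hFdiff.continuous
  obtain ⟨ε, hεpos, hεb⟩ := norm_bound γ x hspan
  -- uniform ε'
  obtain ⟨ε', hε'pos, hε'⟩ : ∃ ε' > 0, ∀ i, x i ≠ 0 → ε' * |x i| ≤ c i := by
    set S := Finset.univ.filter (fun i : Fin m => x i ≠ 0) with hS
    rcases S.eq_empty_or_nonempty with hSe | hSne
    · refine ⟨1, one_pos, fun i hi => ?_⟩
      have : i ∈ S := by simp [hS, hi]
      rw [hSe] at this; simp at this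
    · refine ⟨S.inf' hSne (fun i => c i / |x i|), ?_, ?_⟩
      · rw [gt_iff_lt, Finset.lt_inf'_iff]
        intro i hiS
        have hxi : x i ≠ 0 := by simpa [hS] using hiS
        exact div_pos (hcpos i hxi) (abs_pos.2 hxi)
      · intro i hi
        have hiS : i ∈ S := by simp [hS, hi]
        have hle := Finset.inf'_le (fun i => c i / |x i|) hiS
        exact (le_div_iff₀ (abs_pos.2 hi)).1 hle
  have hβex : ∀ i : Fin m, ∃ β, 0 ≤ β ∧
      ∀ t : ℝ, (ε' * |x i|) * |t| - β ≤ x i ^ 2 / 2 * Real.exp (2 * t) - c i * t := by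
    intro i
    apply term_bound
    · positivity
    · positivity
    · by_cases hxi : x i = 0
      · simp [hxi, hc0 i hxi]
      · exact hε' i hxi
    · intro h
      have hxi : x i = 0 := by
        by_contra hne
        have : (0:ℝ) < x i ^ 2 / 2 := by positivity
        linarith
      exact hc0 i hxi
  choose β hβ0 hβ using hβex
  set B := ∑ i, β i with hB
  have hFlb : ∀ v : V, ε' * ε * ‖v‖ - B ≤ F v := by
    intro v
    have h2 : ∑ i, ((ε' * |x i|) * |γ i v| - β i) ≤ F v := by
      have hFv : F v = ∑ i, (x i ^ 2 / 2 * Real.exp (2 * γ i v) - c i * γ i v) := by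
        simp only [hF]
        rw [Finset.sum_sub_distrib]
      rw [hFv]
      exact Finset.sum_le_sum fun i _ => hβ i (γ i v)
    have h3 : ∑ i, ((ε' * |x i|) * |γ i v| - β i)
        = ε' * (∑ i, |x i| * |γ i v|) - B := by
      rw [Finset.sum_sub_distrib, Finset.mul_sum, hB]
      congr 1
      exact Finset.sum_congr rfl fun i _ => by ring
    have h4 : ε' * (ε * ‖v‖) ≤ ε' * ∑ i, |x i| * |γ i v| :=
      mul_le_mul_of_nonneg_left (hεb v) hε'pos.le
    rw [h3] at h2
    calc ε' * ε * ‖v‖ - B = ε' * (ε * ‖v‖) - B := by ring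
      _ ≤ ε' * (∑ i, |x i| * |γ i v|) - B := by linarith
      _ ≤ F v := h2
  have htend : Tendsto F (cocompact V) atTop := by
    have hG : Tendsto (fun r : ℝ => ε' * ε * r - B) atTop atTop := by
      have h1 : Tendsto (fun r : ℝ => ε' * ε * r) atTop atTop :=
        Tendsto.const_mul_atTop (by positivity) tendsto_id
      simpa [sub_eq_add_neg] using tendsto_atTop_add_const_right atTop (-B) h1
    exact tendsto_atTop_mono hFlb (hG.comp tendsto_norm_cocompact_atTop)
  obtain ⟨v₀, hv₀⟩ := hFcont.exists_forall_le htend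
  have hmin : IsLocalMin F v₀ := Filter.Eventually.of_forall hv₀
  have hzero := hmin.hasFDerivAt_eq_zero (hF' v₀)
  exact ⟨v₀, sub_eq_zero.1 hzero⟩

lemma inj_aux {V : Type*} [NormedAddCommGroup V] [NormedSpace ℝ V]
    [FiniteDimensional ℝ V] {m : ℕ} (γ : Fin m → (V →L[ℝ] ℝ))
    (x : Fin m → ℝ)
    (hspan : Submodule.span ℝ (γ '' {i | x i ≠ 0}) = ⊤) :
    Function.Injective
        (fun v : V => ∑ i, (Real.exp (2 * γ i v) * x i ^ 2) • γ i) := by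
  intro u v huv
  simp only at huv
  have hnn : ∀ i ∈ Finset.univ, 0 ≤
      (Real.exp (2 * γ i u) * x i ^ 2 - Real.exp (2 * γ i v) * x i ^ 2) * (γ i u - γ i v) := by
    intro i _
    rcases le_total (γ i u) (γ i v) with h | h
    · have he : Real.exp (2 * γ i u) ≤ Real.exp (2 * γ i v) :=
        Real.exp_le_exp.2 (by linarith)
      nlinarith [mul_nonneg (mul_nonneg (sub_nonneg.2 he) (sq_nonneg (x i)))
        (sub_nonneg.2 h)]
    · have he : Real.exp (2 * γ i v) ≤ Real.exp (2 * γ i u) :=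
        Real.exp_le_exp.2 (by linarith)
      nlinarith [mul_nonneg (mul_nonneg (sub_nonneg.2 he) (sq_nonneg (x i)))
        (sub_nonneg.2 h)]
  have hsum : ∑ i, (Real.exp (2 * γ i u) * x i ^ 2 - Real.exp (2 * γ i v) * x i ^ 2)
      * (γ i u - γ i v) = 0 := by
    have h1 : ∑ i, (Real.exp (2 * γ i u) * x i ^ 2 - Real.exp (2 * γ i v) * x i ^ 2)
        * (γ i u - γ i v) =
        (∑ i, (Real.exp (2 * γ i u) * x i ^ 2) • γ i) (u - v)
        - (∑ i, (Real.exp (2 * γ i v) * x i ^ 2) • γ i) (u - v) := by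
      simp only [ContinuousLinearMap.sum_apply, ContinuousLinearMap.coe_smul',
        Pi.smul_apply, map_sub, smul_eq_mul, ← Finset.sum_sub_distrib]
      exact Finset.sum_congr rfl fun i _ => by ring
    rw [h1, huv, sub_self]
  have hS0 := (Finset.sum_eq_zero_iff_of_nonneg hnn).1 hsum
  have hkey : ∀ i, x i ≠ 0 → γ i u = γ i v := by
    intro i hxi
    by_contra hne
    have hx2 : (0:ℝ) < x i ^ 2 := by positivity
    have hSi := hS0 i (Finset.mem_univ i)
    rcases lt_or_gt_of_ne hne with h | h
    · have he : Real.exp (2 * γ i u) < Real.exp (2 * γ i v) :=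
        Real.exp_lt_exp.2 (by linarith)
      have h5 : 0 < (Real.exp (2 * γ i v) - Real.exp (2 * γ i u)) * x i ^ 2 :=
        mul_pos (by linarith) hx2
      nlinarith [mul_pos h5 (by linarith : (0:ℝ) < γ i v - γ i u)]
    · have he : Real.exp (2 * γ i v) < Real.exp (2 * γ i u) :=
        Real.exp_lt_exp.2 (by linarith)
      have h5 : 0 < (Real.exp (2 * γ i u) - Real.exp (2 * γ i v)) * x i ^ 2 :=
        mul_pos (by linarith) hx2
      nlinarith [mul_pos h5 (by linarith : (0:ℝ) < γ i u - γ i v)]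
  have hzero : u - v = 0 :=
    sep_aux γ x hspan (u - v) (fun i hi => by rw [map_sub, hkey i hi, sub_self])
  exact sub_eq_zero.1 hzero

lemma interior_sub_range {V : Type*} [NormedAddCommGroup V] [NormedSpace ℝ V]
    [FiniteDimensional ℝ V] {m : ℕ} (γ : Fin m → (V →L[ℝ] ℝ))
    (x : Fin m → ℝ)
    (hspan : Submodule.span ℝ (γ '' {i | x i ≠ 0}) = ⊤)
    (w : V →L[ℝ] ℝ) (hw : w ∈ interior (coneOf γ {i | x i ≠ 0})) :
    ∃ v : V, ∑ i, (Real.exp (2 * γ i v) * x i ^ 2) • γ i = w := by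
  classical
  obtain ⟨δ, hδ, hball⟩ := Metric.mem_nhds_iff.1 (mem_interior_iff_mem_nhds.1 hw)
  have hex : ∃ u : V →L[ℝ] ℝ, u = ∑ i, (if x i ≠ 0 then (1:ℝ) else 0) • γ i := ⟨_, rfl⟩
  obtain ⟨u, hu⟩ := hex
  have hex2 : ∃ ε₀ : ℝ, ε₀ = δ / (2 * (‖u‖ + 1)) := ⟨_, rfl⟩
  obtain ⟨ε₀, hε₀⟩ := hex2
  have hε₀pos : 0 < ε₀ := by rw [hε₀]; positivity
  have hmemball : w - ε₀ • u ∈ Metric.ball w δ := by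
    rw [Metric.mem_ball, dist_eq_norm]
    have heq : w - ε₀ • u - w = -(ε₀ • u) := by abel
    rw [heq, norm_neg]
    have h2 : ‖ε₀ • u‖ = ε₀ * ‖u‖ := by
      rw [show ‖ε₀ • u‖ = ‖ε₀‖ * ‖u‖ from norm_smul ε₀ u, Real.norm_eq_abs,
        abs_of_pos hε₀pos]
    rw [h2]
    have hnu : 0 ≤ ‖u‖ := norm_nonneg u
    rw [hε₀, div_mul_eq_mul_div, div_lt_iff₀ (by positivity)]
    nlinarith
  obtain ⟨d, hd0, hdI, hdsum⟩ := hball hmemball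
  obtain ⟨v, hv⟩ := surj_aux γ x hspan (fun i => d i + if x i ≠ 0 then ε₀ else 0)
    (fun i hi => by
      show 0 < d i + if x i ≠ 0 then ε₀ else 0
      rw [if_pos hi]
      exact add_pos_of_nonneg_of_pos (hd0 i) hε₀pos)
    (fun i hi => by
      show d i + (if x i ≠ 0 then ε₀ else 0) = 0
      have hdi : d i = 0 := hdI i (by simp [hi])
      rw [if_neg (by simp [hi]), hdi, add_zero])
  refine ⟨v, ?_⟩
  rw [hv]
  have hsplit : ∑ i, ((d i + if x i ≠ 0 then ε₀ else 0)) • γ i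
      = (∑ i, d i • γ i) + ε₀ • u := by
    rw [hu, Finset.smul_sum, ← Finset.sum_add_distrib]
    refine Finset.sum_congr rfl fun i _ => ?_
    by_cases hxi : x i ≠ 0 <;> simp [hxi, add_smul, smul_smul]
  rw [hsplit, ← hdsum]
  abel

/-- If `{γ i : x i ≠ 0}` spans `V*`, then the Legendre-type
map `L(v) = Σ e^{2 γ i (v)} x i ² • γ i` is injective and its range is the
relative interior of `cone{γ i : x i ≠ 0}`. -/
theorem stmt13 {V : Type*} [NormedAddCommGroup V] [NormedSpace ℝ V]
    [FiniteDimensional ℝ V] {m : ℕ} (γ : Fin m → (V →L[ℝ] ℝ))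
    (x : Fin m → ℝ)
    (hspan : Submodule.span ℝ (γ '' {i | x i ≠ 0}) = ⊤) :
    Function.Injective
        (fun v : V => ∑ i, (Real.exp (2 * γ i v) * x i ^ 2) • γ i) ∧
      Set.range (fun v : V => ∑ i, (Real.exp (2 * γ i v) * x i ^ 2) • γ i) =
        intrinsicInterior ℝ (coneOf γ {i | x i ≠ 0}) := by
  refine ⟨inj_aux γ x hspan, ?_⟩
  classical
  have haff : affineSpan ℝ (coneOf γ {i | x i ≠ 0}) = ⊤ := by
    have hmem := mem_interior_cone γ x hspan (fun i => if x i ≠ 0 then 1 else 0)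
      (fun i hi => by simp [hi]) (fun i hi => by simp [hi])
    have hne : (interior (coneOf γ {i | x i ≠ 0})).Nonempty := ⟨_, hmem⟩
    have h1 := isOpen_interior.affineSpan_eq_top hne
    exact top_unique (h1 ▸ affineSpan_mono ℝ interior_subset)
  rw [intrinsic_eq_interior haff]
  ext w
  constructor
  · rintro ⟨v, rfl⟩
    exact mem_interior_cone γ x hspan (fun i => Real.exp (2 * γ i v) * x i ^ 2)
      (fun i hi => by positivity) (fun i hi => by simp [hi])
  · intro hw
    exact interior_sub_range γ x hspan w hw
end

section
/- Let K be a simplicial complex on {1,…,m}. The shear map (ℝ_{>0} × V') × U(K) → U(K) × U(K), ((r, v'), x) ↦ ((r, v') • x, x), is a proper map (the preimage of every compact set is compact) if and only if for every I, J ∈ K the convex hulls conv{γ'_i : i ∉ I} and conv{γ'_j : j ∉ J} have a common point lying in the topological interior of each of them in (V')*. Moreover, when this holds the action of ℝ_{>0} × V' on U(K) is also free. -/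
/-- `U(K) = {x ∈ ℝ^m : {i : x i = 0} ∈ K}`, with the subspace topology. -/
abbrev UK {m : ℕ} (K : Set (Set (Fin m))) : Type _ :=
  {x : Fin m → ℝ // {i | x i = 0} ∈ K}

/-- The shear map `(ℝ_{>0} × V') × U(K) → U(K) × U(K)`,
`((r, v'), x) ↦ ((r, v') • x, x)`, of the action
`(r, v') • x = (r e^{γ'₁(v')} x₁, …, r e^{γ'_m(v')} x_m)`. -/
noncomputable def shearPos {V' : Type*} [NormedAddCommGroup V'] [NormedSpace ℝ V']
    {m : ℕ} (γ' : Fin m → (V' →L[ℝ] ℝ)) (K : Set (Set (Fin m))) :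
    ({r : ℝ // 0 < r} × V') × UK K → UK K × UK K := fun p =>
  (⟨fun i => p.1.1.1 * Real.exp (γ' i p.1.2) * p.2.1 i, by
      have h : {i | p.1.1.1 * Real.exp (γ' i p.1.2) * p.2.1 i = 0} =
          {i | p.2.1 i = 0} := by
        ext i
        simp [mul_eq_zero, Real.exp_ne_zero, p.1.1.2.ne']
      show {i | p.1.1.1 * Real.exp (γ' i p.1.2) * p.2.1 i = 0} ∈ K
      rw [h]
      exact p.2.2⟩, p.2)

section ShearAux

open Real Set Filter Topology

section Aux
variable {V' : Type*} [NormedAddCommGroup V'] [NormedSpace ℝ V'] [FiniteDimensional ℝ V']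

/-- Every linear functional on the continuous dual of a finite-dimensional space
is evaluation at a vector. -/
lemma shear_exists_eval (f : (V' →L[ℝ] ℝ) →ₗ[ℝ] ℝ) (hf : f ≠ 0) :
    ∃ v' : V', v' ≠ 0 ∧ ∀ w : V' →L[ℝ] ℝ, w v' = f w := by
  let e : Module.Dual ℝ V' ≃ₗ[ℝ] (V' →L[ℝ] ℝ) := LinearMap.toContinuousLinearMap
  let φ : Module.Dual ℝ (Module.Dual ℝ V') := f ∘ₗ (e : Module.Dual ℝ V' →ₗ[ℝ] (V' →L[ℝ] ℝ))
  have hkey : ∀ w : V' →L[ℝ] ℝ, w ((Module.evalEquiv ℝ V').symm φ) = f w := by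
    intro w
    have h2 : (e.symm w) ((Module.evalEquiv ℝ V').symm φ) = φ (e.symm w) :=
      Module.apply_evalEquiv_symm_apply ℝ V' _ _
    have h3 : φ (e.symm w) = f (e (e.symm w)) := rfl
    rw [e.apply_symm_apply] at h3
    have h4 : (e.symm w) ((Module.evalEquiv ℝ V').symm φ) = w ((Module.evalEquiv ℝ V').symm φ) := rfl
    rw [← h4, h2, h3]
  refine ⟨(Module.evalEquiv ℝ V').symm φ, ?_, hkey⟩
  intro h0
  apply hf
  ext w
  have := hkey w
  rw [h0] at this
  simpa using this.symm

lemma shear_eval_eq_zero {v' : V'} (h : ∀ w : V' →L[ℝ] ℝ, w v' = 0) : v' = 0 := by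
  by_contra h0
  obtain ⟨g, -, hg⟩ := exists_dual_vector ℝ v' (norm_ne_zero_iff.mpr h0)
  rw [h g] at hg
  exact h0 (norm_eq_zero.mp (by exact_mod_cast hg.symm))

lemma shear_pinch {s t : Set (V' →L[ℝ] ℝ)} {v' : V'} {c : ℝ}
    (hs : ∀ w ∈ s, w v' ≤ c) (ht : ∀ w ∈ t, c ≤ w v')
    {p : V' →L[ℝ] ℝ} (hp : p ∈ interior s) (hp' : p ∈ interior t) :
    v' = 0 ∧ c = 0 := by
  have hpc : p v' = c := le_antisymm (hs p (interior_subset hp)) (ht p (interior_subset hp'))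
  have hv : v' = 0 := by
    apply shear_eval_eq_zero
    intro u
    have hcont : Tendsto (fun τ : ℝ => p + τ • u) (𝓝 0) (𝓝 p) := by
      have hc : Continuous fun τ : ℝ => p + τ • u := by continuity
      simpa using hc.tendsto 0
    have hev : ∀ᶠ τ : ℝ in 𝓝 0, (p + τ • u) ∈ interior s ∩ interior t :=
      hcont.eventually_mem ((isOpen_interior.inter isOpen_interior).mem_nhds ⟨hp, hp'⟩)
    obtain ⟨ε, hε, hball⟩ := Metric.eventually_nhds_iff.mp hev
    have hτ : (p + (ε/2) • u) ∈ interior s ∩ interior t := by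
      apply hball
      rw [Real.dist_eq, sub_zero, abs_of_pos (by positivity)]
      linarith
    have heq : (p + (ε/2) • u) v' = c :=
      le_antisymm (hs _ (interior_subset hτ.1)) (ht _ (interior_subset hτ.2))
    have h5 : p v' + (ε/2) * u v' = c := by simpa using heq
    have hu : (ε/2) * u v' = 0 := by linarith
    rcases mul_eq_zero.mp hu with h | h
    · exact absurd h (by positivity)
    · exact h
  refine ⟨hv, ?_⟩
  rw [hv] at hpc
  simpa using hpc.symm

end Aux

/-- Separating data for the shear map: an affine functional on the dual with the
points `γ' i` on prescribed sides. -/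
def ShearSepData {V' : Type*} [NormedAddCommGroup V'] [NormedSpace ℝ V'] {m : ℕ}
    (γ' : Fin m → (V' →L[ℝ] ℝ)) (K : Set (Set (Fin m))) : Prop :=
  ∃ (c : ℝ) (v' : V') (I J : Set (Fin m)), (c ≠ 0 ∨ v' ≠ 0) ∧ I ∈ K ∧ J ∈ K ∧
    (∀ i, c < γ' i v' → i ∈ I) ∧ (∀ i, γ' i v' < c → i ∈ J)

section Sep
variable {V' : Type*} [NormedAddCommGroup V'] [NormedSpace ℝ V'] [FiniteDimensional ℝ V']
  {m : ℕ}

lemma shear_no_data (γ' : Fin m → (V' →L[ℝ] ℝ)) (K : Set (Set (Fin m)))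
    (hcond : ∀ I ∈ K, ∀ J ∈ K, (interior (convexHull ℝ (γ' '' Iᶜ)) ∩
      interior (convexHull ℝ (γ' '' Jᶜ))).Nonempty) :
    ¬ ShearSepData γ' K := by
  rintro ⟨c, v', I, J, hne, hI, hJ, hpos, hneg⟩
  obtain ⟨p, hp1, hp2⟩ := hcond I hI J hJ
  have hlin : IsLinearMap ℝ (fun w : V' →L[ℝ] ℝ => w v') :=
    ⟨fun a b => by simp, fun r a => by simp⟩
  have hs : ∀ w ∈ convexHull ℝ (γ' '' Iᶜ), w v' ≤ c := by
    intro w hw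
    refine convexHull_min ?_ (convex_halfSpace_le hlin c) hw
    rintro _ ⟨i, hi, rfl⟩
    simp only [mem_setOf_eq]
    by_contra hlt
    push_neg at hlt
    exact hi (hpos i hlt)
  have ht : ∀ w ∈ convexHull ℝ (γ' '' Jᶜ), c ≤ w v' := by
    intro w hw
    refine convexHull_min ?_ (convex_halfSpace_ge hlin c) hw
    rintro _ ⟨i, hi, rfl⟩
    simp only [mem_setOf_eq]
    by_contra hlt
    push_neg at hlt
    exact hi (hneg i hlt)
  obtain ⟨hv, hc⟩ := shear_pinch hs ht hp1 hp2
  rcases hne with h | h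
  exacts [h hc, h hv]

end Sep

section Sep2
variable {V' : Type*} [NormedAddCommGroup V'] [NormedSpace ℝ V'] [FiniteDimensional ℝ V']
  {m : ℕ}

lemma shear_sep_of_empty_interior (γ' : Fin m → (V' →L[ℝ] ℝ)) (K : Set (Set (Fin m)))
    {I : Set (Fin m)} (hI : I ∈ K)
    (hint : ¬ (interior (convexHull ℝ (γ' '' Iᶜ))).Nonempty) :
    ShearSepData γ' K := by
  by_cases hA : (γ' '' Iᶜ).Nonempty
  · have hconv : Convex ℝ (convexHull ℝ (γ' '' Iᶜ)) := convex_convexHull ℝ _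
    have hspan : affineSpan ℝ (convexHull ℝ (γ' '' Iᶜ)) ≠ ⊤ := by
      intro h
      exact hint ((hconv.interior_nonempty_iff_affineSpan_eq_top).mpr h)
    rw [affineSpan_convexHull] at hspan
    obtain ⟨w₀, hw₀⟩ := hA
    have hvs : vectorSpan ℝ (γ' '' Iᶜ) < ⊤ := by
      rcases lt_or_eq_of_le (le_top (a := vectorSpan ℝ (γ' '' Iᶜ))) with h | h
      · exact h
      · exact absurd ((AffineSubspace.affineSpan_eq_top_iff_vectorSpan_eq_top_of_nonempty ℝ
          (V' →L[ℝ] ℝ) (V' →L[ℝ] ℝ) ⟨w₀, hw₀⟩).mpr h) hspan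
    obtain ⟨f, hf0, hfmap⟩ := Submodule.exists_dual_map_eq_bot_of_lt_top hvs inferInstance
    obtain ⟨v₀, hv₀, hev⟩ := shear_exists_eval f hf0
    have heq : ∀ i ∉ I, γ' i v₀ = f w₀ := by
      intro i hiI
      have hmem : γ' i ∈ γ' '' Iᶜ := ⟨i, hiI, rfl⟩
      have hd : γ' i - w₀ ∈ vectorSpan ℝ (γ' '' Iᶜ) := by
        have := vsub_mem_vectorSpan ℝ hmem hw₀
        simpa using this
      have hz : f (γ' i - w₀) = 0 := by
        have hm : f (γ' i - w₀) ∈ Submodule.map f (vectorSpan ℝ (γ' '' Iᶜ)) :=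
          Submodule.mem_map_of_mem hd
        rw [hfmap] at hm
        simpa using hm
      rw [map_sub] at hz
      rw [hev (γ' i)]
      linarith
    refine ⟨f w₀, v₀, I, I, Or.inr hv₀, hI, hI, ?_, ?_⟩
    · intro i hlt
      by_contra hiI
      rw [heq i hiI] at hlt
      exact lt_irrefl _ hlt
    · intro i hlt
      by_contra hiI
      rw [heq i hiI] at hlt
      exact lt_irrefl _ hlt
  · have hall : ∀ i, i ∈ I := by
      intro i
      by_contra hi
      exact hA ⟨γ' i, ⟨i, hi, rfl⟩⟩
    exact ⟨-1, 0, I, I, Or.inl (by norm_num), hI, hI, fun i _ => hall i, fun i _ => hall i⟩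

lemma shear_sep (γ' : Fin m → (V' →L[ℝ] ℝ)) (K : Set (Set (Fin m)))
    {I J : Set (Fin m)} (hI : I ∈ K) (hJ : J ∈ K)
    (h : ¬ (interior (convexHull ℝ (γ' '' Iᶜ)) ∩
      interior (convexHull ℝ (γ' '' Jᶜ))).Nonempty) :
    ShearSepData γ' K := by
  by_cases h1 : (interior (convexHull ℝ (γ' '' Iᶜ))).Nonempty
  · by_cases h2 : (interior (convexHull ℝ (γ' '' Jᶜ))).Nonempty
    · obtain ⟨p₁, hp₁⟩ := h1
      obtain ⟨p₂, hp₂⟩ := h2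
      have hdisj : Disjoint (interior (convexHull ℝ (γ' '' Iᶜ))) (convexHull ℝ (γ' '' Jᶜ)) := by
        rw [Set.disjoint_left]
        intro x hx hxJ
        apply h
        have hz : Tendsto (fun τ : ℝ => τ • p₂ + (1-τ) • x) (𝓝[>] 0) (𝓝 x) := by
          have hc : Continuous fun τ : ℝ => τ • p₂ + (1-τ) • x :=
            (continuous_id.smul continuous_const).add
              ((continuous_const.sub continuous_id).smul continuous_const)
          exact tendsto_nhdsWithin_of_tendsto_nhds (by simpa using hc.tendsto 0)
        have hev : ∀ᶠ τ in 𝓝[>] (0:ℝ),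
            (τ • p₂ + (1-τ) • x) ∈ interior (convexHull ℝ (γ' '' Iᶜ)) :=
          hz.eventually_mem (isOpen_interior.mem_nhds hx)
        have hev2 : ∀ᶠ τ in 𝓝[>] (0:ℝ),
            (τ • p₂ + (1-τ) • x) ∈ interior (convexHull ℝ (γ' '' Jᶜ)) := by
          filter_upwards [Ioc_mem_nhdsGT_of_mem (Set.mem_Ico.mpr ⟨le_refl (0:ℝ), one_pos⟩)]
            with τ hτ
          exact (convex_convexHull ℝ _).combo_interior_closure_mem_interior hp₂
            (subset_closure hxJ) hτ.1 (by linarith [hτ.2]) (by ring)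
        obtain ⟨τ, hτ1, hτ2⟩ := (hev.and hev2).exists
        exact ⟨_, hτ1, hτ2⟩
      obtain ⟨f, u, hfu, hfJ⟩ := geometric_hahn_banach_open
        (Convex.interior (convex_convexHull ℝ _)) isOpen_interior (convex_convexHull ℝ _) hdisj
      have hfI : ∀ w ∈ convexHull ℝ (γ' '' Iᶜ), f w ≤ u := by
        intro w hw
        have hz : Tendsto (fun τ : ℝ => τ • p₁ + (1-τ) • w) (𝓝[>] 0) (𝓝 w) := by
          have hc : Continuous fun τ : ℝ => τ • p₁ + (1-τ) • w :=
            (continuous_id.smul continuous_const).add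
              ((continuous_const.sub continuous_id).smul continuous_const)
          exact tendsto_nhdsWithin_of_tendsto_nhds (by simpa using hc.tendsto 0)
        have hevf : ∀ᶠ τ in 𝓝[>] (0:ℝ), f (τ • p₁ + (1-τ) • w) < u := by
          filter_upwards [Ioc_mem_nhdsGT_of_mem (Set.mem_Ico.mpr ⟨le_refl (0:ℝ), one_pos⟩)]
            with τ hτ
          exact hfu _ ((convex_convexHull ℝ _).combo_interior_closure_mem_interior hp₁
            (subset_closure hw) hτ.1 (by linarith [hτ.2]) (by ring))
        have hten : Tendsto (fun τ : ℝ => f (τ • p₁ + (1-τ) • w)) (𝓝[>] 0) (𝓝 (f w)) :=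
          (f.continuous.tendsto w).comp hz
        exact le_of_tendsto hten (hevf.mono fun τ hh => hh.le)
      have hf0 : f.toLinearMap ≠ 0 := by
        intro h0
        have ha := hfu p₁ hp₁
        have hb := hfJ p₂ (interior_subset hp₂)
        have hfa : f p₁ = 0 := by
          have : f.toLinearMap p₁ = 0 := by rw [h0]; rfl
          exact this
        have hfb : f p₂ = 0 := by
          have : f.toLinearMap p₂ = 0 := by rw [h0]; rfl
          exact this
        rw [hfa] at ha
        rw [hfb] at hb
        linarith
      obtain ⟨v', hv', hev⟩ := shear_exists_eval f.toLinearMap hf0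
      have hev' : ∀ w : V' →L[ℝ] ℝ, w v' = f w := hev
      refine ⟨u, v', I, J, Or.inr hv', hI, hJ, ?_, ?_⟩
      · intro i hlt
        by_contra hi
        have := hfI (γ' i) (subset_convexHull ℝ _ ⟨i, hi, rfl⟩)
        rw [hev' (γ' i)] at hlt
        linarith
      · intro i hlt
        by_contra hi
        have := hfJ (γ' i) (subset_convexHull ℝ _ ⟨i, hi, rfl⟩)
        rw [hev' (γ' i)] at hlt
        linarith
    · exact shear_sep_of_empty_interior γ' K hJ h2
  · exact shear_sep_of_empty_interior γ' K hI h1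

end Sep2

section NotProper
variable {V' : Type*} [NormedAddCommGroup V'] [NormedSpace ℝ V'] {m : ℕ}

lemma shear_continuous (γ' : Fin m → (V' →L[ℝ] ℝ)) (K : Set (Set (Fin m))) :
    Continuous (shearPos γ' K) := by
  apply Continuous.prodMk ?_ continuous_snd
  apply Continuous.subtype_mk
  apply continuous_pi
  intro i
  exact ((continuous_subtype_val.comp (continuous_fst.comp continuous_fst)).mul
    (Real.continuous_exp.comp ((γ' i).continuous.comp (continuous_snd.comp continuous_fst)))).mul
    ((continuous_apply i).comp (continuous_subtype_val.comp continuous_snd))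

lemma shear_not_proper (γ' : Fin m → (V' →L[ℝ] ℝ)) (K : Set (Set (Fin m)))
    (hKempty : ∅ ∈ K) (hKdown : ∀ I ∈ K, ∀ J ⊆ I, J ∈ K)
    (hd : ShearSepData γ' K) :
    ¬ (∀ C : Set (UK K × UK K), IsCompact C → IsCompact (shearPos γ' K ⁻¹' C)) := by
  obtain ⟨c, v', I, J, hne, hI, hJ, hpos, hneg⟩ := hd
  intro hproper
  set a : Fin m → ℝ := fun i => γ' i v' - c with ha
  have hxmem : ∀ n : ℕ, {i | Real.exp (-(n:ℝ) * max (a i) 0) = 0} ∈ K := by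
    intro n
    have h : {i | Real.exp (-(n:ℝ) * max (a i) 0) = 0} = (∅ : Set (Fin m)) := by
      ext i; simp [Real.exp_ne_zero]
    rw [h]; exact hKempty
  set xseq : ℕ → UK K := fun n => ⟨fun i => Real.exp (-(n:ℝ) * max (a i) 0), hxmem n⟩ with hxseq
  set g : ℕ → {r : ℝ // 0 < r} × V' :=
    fun n => (⟨Real.exp (-(n:ℝ) * c), Real.exp_pos _⟩, (n:ℝ) • v') with hg
  set xlim : Fin m → ℝ := fun i => if 0 < a i then 0 else 1 with hxlim
  set ylim : Fin m → ℝ := fun i => if a i < 0 then 0 else 1 with hylim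
  have hxlimmem : {i | xlim i = 0} ∈ K := by
    have h : {i | xlim i = 0} = {i | 0 < a i} := by
      ext i; by_cases h : 0 < a i <;> simp [hxlim, h]
    rw [h]
    exact hKdown I hI _ (fun i hi => hpos i (by
      have hh : 0 < a i := hi
      simp only [ha] at hh; linarith))
  have hylimmem : {i | ylim i = 0} ∈ K := by
    have h : {i | ylim i = 0} = {i | a i < 0} := by
      ext i; by_cases h : a i < 0 <;> simp [hylim, h]
    rw [h]
    exact hKdown J hJ _ (fun i hi => hneg i (by
      have hh : a i < 0 := hi
      simp only [ha] at hh; linarith))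
  set xU : UK K := ⟨xlim, hxlimmem⟩
  set yU : UK K := ⟨ylim, hylimmem⟩
  have hcompute : ∀ n : ℕ, ((shearPos γ' K (g n, xseq n)).1 : Fin m → ℝ) =
      fun i => Real.exp ((n:ℝ) * min (a i) 0) := by
    intro n
    funext i
    show Real.exp (-(n:ℝ) * c) * Real.exp (γ' i ((n:ℝ) • v')) *
      Real.exp (-(n:ℝ) * max (a i) 0) = _
    rw [map_smul, smul_eq_mul, ← Real.exp_add, ← Real.exp_add]
    congr 1
    have hminmax : min (a i) 0 = a i - max (a i) 0 := by
      rcases le_total (a i) 0 with h | h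
      · rw [min_eq_left h, max_eq_right h]; ring
      · rw [min_eq_right h, max_eq_left h]; ring
    rw [hminmax, ha]
    ring
  have htend1 : Tendsto (fun n => (shearPos γ' K (g n, xseq n)).1) atTop (𝓝 yU) := by
    rw [tendsto_subtype_rng, tendsto_pi_nhds]
    intro i
    have hcore : Tendsto (fun n : ℕ => Real.exp ((n:ℝ) * min (a i) 0)) atTop (𝓝 (ylim i)) := by
      by_cases h : a i < 0
      · rw [hylim]; simp only [if_pos h]
        apply Real.tendsto_exp_atBot.comp
        have := (tendsto_natCast_atTop_atTop (R := ℝ)).atTop_mul_const (neg_pos.mpr h)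
        rw [min_eq_left h.le]
        have h2 : Tendsto (fun n : ℕ => -((n:ℝ) * -(a i))) atTop atBot :=
          tendsto_neg_atTop_atBot.comp this
        refine h2.congr (fun n => by ring)
      · rw [hylim]; simp only [if_neg h]
        push_neg at h
        have heq2 : (fun n : ℕ => Real.exp ((n:ℝ) * min (a i) 0)) = fun _ => 1 := by
          funext n; rw [min_eq_right h, mul_zero, Real.exp_zero]
        rw [heq2]
        exact tendsto_const_nhds
    refine hcore.congr (fun n => ?_)
    rw [hcompute n]
  have htend2 : Tendsto (fun n => xseq n) atTop (𝓝 xU) := by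
    rw [tendsto_subtype_rng, tendsto_pi_nhds]
    intro i
    show Tendsto (fun n : ℕ => Real.exp (-(n:ℝ) * max (a i) 0)) atTop (𝓝 (xlim i))
    by_cases h : 0 < a i
    · rw [hxlim]; simp only [if_pos h]
      apply Real.tendsto_exp_atBot.comp
      have := (tendsto_natCast_atTop_atTop (R := ℝ)).atTop_mul_const h
      rw [max_eq_left h.le]
      have h2 : Tendsto (fun n : ℕ => -((n:ℝ) * a i)) atTop atBot :=
        tendsto_neg_atTop_atBot.comp this
      refine h2.congr (fun n => by ring)
    · rw [hxlim]; simp only [if_neg h]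
      push_neg at h
      have heq2 : (fun n : ℕ => Real.exp (-(n:ℝ) * max (a i) 0)) = fun _ => 1 := by
        funext n; rw [max_eq_right h, mul_zero, Real.exp_zero]
      rw [heq2]
      exact tendsto_const_nhds
  have htendF : Tendsto (fun n => shearPos γ' K (g n, xseq n)) atTop (𝓝 (yU, xU)) :=
    htend1.prodMk_nhds htend2
  set C : Set (UK K × UK K) := insert (yU, xU) (Set.range fun n => shearPos γ' K (g n, xseq n))
  have hC : IsCompact C := htendF.isCompact_insert_range
  have hP := hproper C hC
  have hmem : ∀ n : ℕ, (g n, xseq n) ∈ shearPos γ' K ⁻¹' C :=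
    fun n => Set.subset_insert _ _ (Set.mem_range_self n)
  have hv' : v' = 0 := by
    by_contra hv0
    have hcont : Continuous fun p : ({r : ℝ // 0 < r} × V') × UK K => p.1.2 :=
      continuous_snd.comp continuous_fst
    obtain ⟨Cb, hCb⟩ := (hP.image hcont).isBounded.exists_norm_le
    obtain ⟨n, hn⟩ := exists_nat_gt (Cb / ‖v'‖)
    have h1 := hCb _ (Set.mem_image_of_mem _ (hmem n))
    have h2 : ‖(n:ℝ) • v'‖ ≤ Cb := h1
    rw [norm_smul, Real.norm_natCast] at h2
    have hnv : 0 < ‖v'‖ := norm_pos_iff.mpr hv0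
    rw [div_lt_iff₀ hnv] at hn
    linarith
  have hc : c = 0 := by
    by_contra hc0
    have hcont : Continuous fun p : ({r : ℝ // 0 < r} × V') × UK K => Real.log p.1.1.1 := by
      apply continuous_iff_continuousAt.mpr
      intro p
      have hbase : Continuous fun q : ({r : ℝ // 0 < r} × V') × UK K => (q.1.1 : ℝ) :=
        continuous_subtype_val.comp (continuous_fst.comp continuous_fst)
      exact ContinuousAt.comp (g := Real.log)
        (f := fun q : ({r : ℝ // 0 < r} × V') × UK K => (q.1.1 : ℝ))
        (Real.continuousAt_log p.1.1.2.ne') hbase.continuousAt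
    obtain ⟨Cb, hCb⟩ := (hP.image hcont).isBounded.exists_norm_le
    obtain ⟨n, hn⟩ := exists_nat_gt (Cb / |c|)
    have h1 := hCb _ (Set.mem_image_of_mem _ (hmem n))
    have h2 : ‖Real.log (Real.exp (-(n:ℝ) * c))‖ ≤ Cb := h1
    rw [Real.log_exp, Real.norm_eq_abs, abs_mul, abs_neg, Nat.abs_cast] at h2
    have hc1 : 0 < |c| := abs_pos.mpr hc0
    rw [div_lt_iff₀ hc1] at hn
    linarith
  rcases hne with h | h
  · exact h hc
  · exact h hv'

end NotProper

section Free
variable {V' : Type*} [NormedAddCommGroup V'] [NormedSpace ℝ V'] [FiniteDimensional ℝ V']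
  {m : ℕ}

lemma shear_free (γ' : Fin m → (V' →L[ℝ] ℝ)) (K : Set (Set (Fin m)))
    (hcond : ∀ I ∈ K, ∀ J ∈ K, (interior (convexHull ℝ (γ' '' Iᶜ)) ∩
      interior (convexHull ℝ (γ' '' Jᶜ))).Nonempty) :
    ∀ (r : {r : ℝ // 0 < r}) (v' : V') (x : Fin m → ℝ), {i | x i = 0} ∈ K →
      (fun i => r.1 * Real.exp (γ' i v') * x i) = x → r.1 = 1 ∧ v' = 0 := by
  intro r v' x hx heq
  obtain ⟨p, hp1, hp2⟩ := hcond _ hx _ hx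
  set c : ℝ := -Real.log r.1 with hcdef
  have heval : ∀ i, i ∈ {i | x i = 0}ᶜ → γ' i v' = c := by
    intro i hxi
    have hxi' : x i ≠ 0 := hxi
    have h1 : r.1 * Real.exp (γ' i v') * x i = x i := congrFun heq i
    have h2 : r.1 * Real.exp (γ' i v') = 1 :=
      mul_right_cancel₀ hxi' (by rw [h1, one_mul])
    have h4 := congrArg Real.log h2
    rw [Real.log_mul r.2.ne' (Real.exp_ne_zero _), Real.log_exp, Real.log_one] at h4
    rw [hcdef]; linarith
  have hlin : IsLinearMap ℝ (fun w : V' →L[ℝ] ℝ => w v') :=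
    ⟨fun a b => by simp, fun s a => by simp⟩
  have hs : ∀ w ∈ convexHull ℝ (γ' '' {i | x i = 0}ᶜ), w v' ≤ c := by
    intro w hw
    refine convexHull_min ?_ (convex_halfSpace_le hlin c) hw
    rintro _ ⟨i, hi, rfl⟩
    exact (heval i hi).le
  have ht : ∀ w ∈ convexHull ℝ (γ' '' {i | x i = 0}ᶜ), c ≤ w v' := by
    intro w hw
    refine convexHull_min ?_ (convex_halfSpace_ge hlin c) hw
    rintro _ ⟨i, hi, rfl⟩
    exact (heval i hi).ge
  obtain ⟨hv, hc⟩ := shear_pinch hs ht hp1 hp2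
  refine ⟨?_, hv⟩
  have hlog : Real.log r.1 = 0 := by rw [hcdef] at hc; linarith
  rw [← Real.exp_log r.2, hlog, Real.exp_zero]

end Free

section Proper
variable {V' : Type*} [NormedAddCommGroup V'] [NormedSpace ℝ V'] [FiniteDimensional ℝ V'] {m : ℕ}

lemma shear_proper (γ' : Fin m → (V' →L[ℝ] ℝ)) (K : Set (Set (Fin m)))
    (hnd : ¬ ShearSepData γ' K) :
    ∀ C : Set (UK K × UK K), IsCompact C → IsCompact (shearPos γ' K ⁻¹' C) := by
  intro C hC
  have hPcl : IsClosed (shearPos γ' K ⁻¹' C) := hC.isClosed.preimage (shear_continuous γ' K)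
  have hbound : ∃ R : ℝ, ∀ p ∈ shearPos γ' K ⁻¹' C, |Real.log p.1.1.1| + ‖p.1.2‖ ≤ R := by
    by_contra hno
    push_neg at hno
    choose p hp hlt using fun n : ℕ => hno n
    set t : ℕ → ℝ := fun n => |Real.log (p n).1.1.1| + ‖(p n).1.2‖ with htdef
    have ht : ∀ n : ℕ, (n:ℝ) < t n := hlt
    have htpos : ∀ n, 0 < t n := fun n => lt_of_le_of_lt (Nat.cast_nonneg n) (ht n)
    have httop : Tendsto t atTop atTop :=
      tendsto_atTop_mono (fun n => (ht n).le) tendsto_natCast_atTop_atTop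
    obtain ⟨l, hlC, φ, hφ, hql⟩ :=
      hC.tendsto_subseq (x := fun n => shearPos γ' K (p n)) (fun n => hp n)
    set u : ℕ → ℝ × V' := fun n =>
      (Real.log (p (φ n)).1.1.1 / t (φ n), (t (φ n))⁻¹ • (p (φ n)).1.2) with hudef
    have humem : ∀ n, u n ∈ Metric.closedBall (0 : ℝ × V') 1 := by
      intro n
      rw [Metric.mem_closedBall, dist_zero_right, Prod.norm_def]
      apply max_le
      · rw [Real.norm_eq_abs, abs_div, abs_of_pos (htpos (φ n)), div_le_one (htpos (φ n))]
        exact le_add_of_nonneg_right (norm_nonneg _)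
      · rw [norm_smul, norm_inv, Real.norm_eq_abs, abs_of_pos (htpos (φ n)),
          inv_mul_le_iff₀ (htpos (φ n)), mul_one]
        exact le_add_of_nonneg_left (abs_nonneg _)
    obtain ⟨sw, _, ψ, hψ, husub⟩ := (isCompact_closedBall (0 : ℝ × V') 1).tendsto_subseq humem
    set σ : ℕ → ℕ := fun n => φ (ψ n) with hσdef
    have httop' : Tendsto (fun n => t (σ n)) atTop atTop :=
      httop.comp ((hφ.comp hψ).tendsto_atTop)
    have hs0 : Tendsto (fun n => Real.log (p (σ n)).1.1.1 / t (σ n)) atTop (𝓝 sw.1) :=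
      (continuous_fst.tendsto sw).comp husub
    have hw0 : Tendsto (fun n => (t (σ n))⁻¹ • (p (σ n)).1.2) atTop (𝓝 sw.2) :=
      (continuous_snd.tendsto sw).comp husub
    have hnorm1 : |sw.1| + ‖sw.2‖ = 1 := by
      have hconst : ∀ n, |Real.log (p (σ n)).1.1.1 / t (σ n)| +
          ‖(t (σ n))⁻¹ • (p (σ n)).1.2‖ = 1 := by
        intro n
        rw [abs_div, abs_of_pos (htpos (σ n)), norm_smul, norm_inv, Real.norm_eq_abs,
          abs_of_pos (htpos (σ n)), inv_mul_eq_div, ← add_div]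
        have hnum : |Real.log (p (σ n)).1.1.1| + ‖(p (σ n)).1.2‖ = t (σ n) := rfl
        rw [hnum, div_self (htpos (σ n)).ne']
      have h1 : Tendsto (fun n => |Real.log (p (σ n)).1.1.1 / t (σ n)| +
          ‖(t (σ n))⁻¹ • (p (σ n)).1.2‖) atTop (𝓝 (|sw.1| + ‖sw.2‖)) :=
        (hs0.abs).add (hw0.norm)
      exact tendsto_nhds_unique h1
        (Tendsto.congr (fun n => (hconst n).symm) tendsto_const_nhds)
    have hqσ : Tendsto (fun n => shearPos γ' K (p (σ n))) atTop (𝓝 l) :=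
      hql.comp hψ.tendsto_atTop
    have hxval : ∀ i, Tendsto (fun n => ((p (σ n)).2 : Fin m → ℝ) i) atTop
        (𝓝 ((l.2 : Fin m → ℝ) i)) := by
      intro i
      have hcont : Continuous fun q : UK K × UK K => (q.2 : Fin m → ℝ) i :=
        (continuous_apply i).comp (continuous_subtype_val.comp continuous_snd)
      exact (hcont.tendsto l).comp hqσ
    have hyval : ∀ i, Tendsto (fun n => (p (σ n)).1.1.1 * Real.exp (γ' i ((p (σ n)).1.2)) *
        ((p (σ n)).2 : Fin m → ℝ) i) atTop (𝓝 ((l.1 : Fin m → ℝ) i)) := by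
      intro i
      have hcont : Continuous fun q : UK K × UK K => (q.1 : Fin m → ℝ) i :=
        (continuous_apply i).comp (continuous_subtype_val.comp continuous_fst)
      exact (hcont.tendsto l).comp hqσ
    set b : Fin m → ℝ := fun i => sw.1 + γ' i sw.2 with hbdef
    set Lf : Fin m → ℕ → ℝ := fun i n => Real.log (p (σ n)).1.1.1 + γ' i ((p (σ n)).1.2)
      with hLfdef
    have hexpL : ∀ i n, Real.exp (Lf i n) =
        (p (σ n)).1.1.1 * Real.exp (γ' i ((p (σ n)).1.2)) := by
      intro i n
      rw [hLfdef, Real.exp_add, Real.exp_log (p (σ n)).1.1.2]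
    have hLdiv : ∀ i, Tendsto (fun n => Lf i n / t (σ n)) atTop (𝓝 (b i)) := by
      intro i
      have h2 : Tendsto (fun n => γ' i ((t (σ n))⁻¹ • (p (σ n)).1.2)) atTop (𝓝 (γ' i sw.2)) :=
        ((γ' i).continuous.tendsto sw.2).comp hw0
      have h3 : ∀ n, γ' i ((t (σ n))⁻¹ • (p (σ n)).1.2) = γ' i ((p (σ n)).1.2) / t (σ n) := by
        intro n
        rw [map_smul, smul_eq_mul, inv_mul_eq_div]
      have h4 := hs0.add (h2.congr h3)
      refine h4.congr (fun n => ?_)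
      rw [hLfdef, add_div]
    have hdivle : ∀ (A B : ℝ) (n : ℕ), A ≤ B → A / t (σ n) ≤ B / t (σ n) := by
      intro A B n hAB
      rw [div_eq_mul_inv, div_eq_mul_inv]
      exact mul_le_mul_of_nonneg_right hAB (inv_nonneg.mpr (htpos (σ n)).le)
    have claim1 : ∀ i, (l.2 : Fin m → ℝ) i ≠ 0 → b i ≤ 0 := by
      intro i hxi
      have hne0 : ∀ᶠ n in atTop, ((p (σ n)).2 : Fin m → ℝ) i ≠ 0 := (hxval i).eventually_ne hxi
      have hratio : Tendsto (fun n => Real.exp (Lf i n)) atTop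
          (𝓝 ((l.1 : Fin m → ℝ) i / (l.2 : Fin m → ℝ) i)) := by
        have hdiv := (hyval i).div (hxval i) hxi
        refine hdiv.congr' ?_
        filter_upwards [hne0] with n hn
        rw [hexpL]
        simp only [Pi.div_apply]
        field_simp
      have hq0 : 0 ≤ (l.1 : Fin m → ℝ) i / (l.2 : Fin m → ℝ) i :=
        le_of_tendsto_of_tendsto' tendsto_const_nhds hratio (fun n => (Real.exp_pos _).le)
      set M := (l.1 : Fin m → ℝ) i / (l.2 : Fin m → ℝ) i + 1 with hM
      have hMpos : 0 < M := by rw [hM]; linarith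
      have hevM : ∀ᶠ n in atTop, Real.exp (Lf i n) < M :=
        hratio.eventually_lt_const (by rw [hM]; linarith)
      have hevL : ∀ᶠ n in atTop, Lf i n / t (σ n) ≤ Real.log M / t (σ n) := by
        filter_upwards [hevM] with n hn
        exact hdivle _ _ n ((Real.lt_log_iff_exp_lt hMpos).mpr hn).le
      have hMdiv : Tendsto (fun n => Real.log M / t (σ n)) atTop (𝓝 0) :=
        tendsto_const_nhds.div_atTop httop'
      exact le_of_tendsto_of_tendsto (hLdiv i) hMdiv hevL
    have claim2 : ∀ i, (l.1 : Fin m → ℝ) i ≠ 0 → 0 ≤ b i := by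
      intro i hyi
      have hyne0 : ∀ᶠ n in atTop, (p (σ n)).1.1.1 * Real.exp (γ' i ((p (σ n)).1.2)) *
          ((p (σ n)).2 : Fin m → ℝ) i ≠ 0 := (hyval i).eventually_ne hyi
      have hratio : Tendsto (fun n => Real.exp (-(Lf i n))) atTop
          (𝓝 ((l.2 : Fin m → ℝ) i / (l.1 : Fin m → ℝ) i)) := by
        have hdiv := (hxval i).div (hyval i) hyi
        refine hdiv.congr' ?_
        filter_upwards [hyne0] with n hn
        have hx0 : ((p (σ n)).2 : Fin m → ℝ) i ≠ 0 := by
          intro h0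
          apply hn
          rw [h0, mul_zero]
        rw [Real.exp_neg, hexpL]
        have hre : (p (σ n)).1.1.1 * Real.exp (γ' i ((p (σ n)).1.2)) ≠ 0 :=
          mul_ne_zero (p (σ n)).1.1.2.ne' (Real.exp_ne_zero _)
        simp only [Pi.div_apply]
        field_simp
      have hq0 : 0 ≤ (l.2 : Fin m → ℝ) i / (l.1 : Fin m → ℝ) i :=
        le_of_tendsto_of_tendsto' tendsto_const_nhds hratio (fun n => (Real.exp_pos _).le)
      set M := (l.2 : Fin m → ℝ) i / (l.1 : Fin m → ℝ) i + 1 with hM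
      have hMpos : 0 < M := by rw [hM]; linarith
      have hevM : ∀ᶠ n in atTop, Real.exp (-(Lf i n)) < M :=
        hratio.eventually_lt_const (by rw [hM]; linarith)
      have hevL : ∀ᶠ n in atTop, -Real.log M / t (σ n) ≤ Lf i n / t (σ n) := by
        filter_upwards [hevM] with n hn
        have h5 : -(Lf i n) < Real.log M := (Real.lt_log_iff_exp_lt hMpos).mpr hn
        exact hdivle _ _ n (by linarith)
      have hMdiv : Tendsto (fun n => -Real.log M / t (σ n)) atTop (𝓝 0) :=
        tendsto_const_nhds.div_atTop httop'
      exact le_of_tendsto_of_tendsto hMdiv (hLdiv i) hevL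
    apply hnd
    refine ⟨-sw.1, sw.2, {i | (l.2 : Fin m → ℝ) i = 0}, {i | (l.1 : Fin m → ℝ) i = 0},
      ?_, l.2.2, l.1.2, ?_, ?_⟩
    · by_cases hsz : sw.1 = 0
      · right
        intro hwz
        rw [hsz, hwz] at hnorm1
        simp at hnorm1
      · left
        exact neg_ne_zero.mpr hsz
    · intro i hlt
      simp only [Set.mem_setOf_eq]
      by_contra hxi
      have hb := claim1 i hxi
      simp only [hbdef] at hb
      linarith
    · intro i hlt
      simp only [Set.mem_setOf_eq]
      by_contra hyi
      have hb := claim2 i hyi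
      simp only [hbdef] at hb
      linarith
  obtain ⟨R, hR⟩ := hbound
  have hK1 : IsCompact
      ((Subtype.val ⁻¹' Icc (Real.exp (-R)) (Real.exp R)) : Set {r : ℝ // 0 < r}) := by
    rw [Topology.IsEmbedding.isCompact_iff Topology.IsEmbedding.subtypeVal]
    have himg : (Subtype.val '' ((Subtype.val ⁻¹' Icc (Real.exp (-R)) (Real.exp R))
        : Set {r : ℝ // 0 < r})) = Icc (Real.exp (-R)) (Real.exp R) := by
      rw [Set.image_preimage_eq_inter_range, Subtype.range_coe_subtype]
      apply Set.inter_eq_left.mpr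
      intro x hx
      exact lt_of_lt_of_le (Real.exp_pos (-R)) hx.1
    rw [himg]
    exact isCompact_Icc
  have hK2 : IsCompact (Prod.snd '' C) := hC.image continuous_snd
  apply IsCompact.of_isClosed_subset
    ((hK1.prod (isCompact_closedBall (0 : V') R)).prod hK2) hPcl
  intro q hq
  have hsum := hR q hq
  have hlog : |Real.log q.1.1.1| ≤ R :=
    le_trans (le_add_of_nonneg_right (norm_nonneg _)) hsum
  have hv : ‖q.1.2‖ ≤ R :=
    le_trans (le_add_of_nonneg_left (abs_nonneg _)) hsum
  refine ⟨⟨?_, ?_⟩, ?_⟩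
  · obtain ⟨h1, h2⟩ := abs_le.mp hlog
    constructor
    · rw [← Real.exp_log q.1.1.2]
      exact Real.exp_le_exp.mpr h1
    · rw [← Real.exp_log q.1.1.2]
      exact Real.exp_le_exp.mpr h2
  · rw [Metric.mem_closedBall, dist_zero_right]
    exact hv
  · exact ⟨shearPos γ' K q, hq, rfl⟩

end Proper

end ShearAux

/-- The shear map of the `ℝ_{>0} × V'` action on `U(K)` is
proper iff for all `I, J ∈ K` the convex hulls `conv{γ' i : i ∉ I}` and
`conv{γ' j : j ∉ J}` have a common point interior to each of them; moreover in
that case the action is free. -/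
theorem stmt17 {V' : Type*} [NormedAddCommGroup V'] [NormedSpace ℝ V']
    [FiniteDimensional ℝ V'] {m : ℕ} (γ' : Fin m → (V' →L[ℝ] ℝ))
    (K : Set (Set (Fin m))) (hKempty : ∅ ∈ K)
    (hKdown : ∀ I ∈ K, ∀ J ⊆ I, J ∈ K) :
    ((∀ C : Set (UK K × UK K), IsCompact C →
        IsCompact (shearPos γ' K ⁻¹' C)) ↔
      ∀ I ∈ K, ∀ J ∈ K,
        (interior (convexHull ℝ (γ' '' Iᶜ)) ∩
          interior (convexHull ℝ (γ' '' Jᶜ))).Nonempty) ∧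
    ((∀ I ∈ K, ∀ J ∈ K,
        (interior (convexHull ℝ (γ' '' Iᶜ)) ∩
          interior (convexHull ℝ (γ' '' Jᶜ))).Nonempty) →
      ∀ (r : {r : ℝ // 0 < r}) (v' : V') (x : Fin m → ℝ), {i | x i = 0} ∈ K →
        (fun i => r.1 * Real.exp (γ' i v') * x i) = x → r.1 = 1 ∧ v' = 0) := by
  refine ⟨⟨?_, ?_⟩, ?_⟩
  · intro hproper I hI J hJ
    by_contra hne
    exact shear_not_proper γ' K hKempty hKdown (shear_sep γ' K hI hJ hne) hproper
  · intro hcond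
    exact shear_proper γ' K (shear_no_data γ' K hcond)
  · exact shear_free γ' K
end
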